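/- Let G be a finite loopless multigraph with first Betti number b₁(G) ≥ 1, and let S be a set of vertices of G each of which has degree at least 3. Then the number of cut vertices of G belonging to S is at least |S| − 2(b₁(G) − 1). (This is the strengthened combinatorial claim proved inside Proposition 4.13 of the paper.) -/
import Mathlib


namespace MG

variable {V E : Type}

/-- Adjacency in the multigraph with incidence map `ε`: `v` and `w` are joined by some
edge. -/
def Adj (ε : E → Sym2 V) (v w : V) : Prop := ∃ e, ε e = s(v, w)

/-- The number of connected components: the number of equivalence classes of the
reflexive-transitive (equivalence) closure of adjacency. -/
noncomputable def numComponents (ε : E → Sym2 V) : ℕ := Nat.card (Quot (Adj ε))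

/-- The degree of a vertex: the number of edges incident to it. -/
noncomputable def deg (ε : E → Sym2 V) (v : V) : ℕ := Nat.card {e : E // v ∈ ε e}

/-- The first Betti number `b₁(G) = |E| - |V| + c(G)`, as an integer. -/
noncomputable def b1 [Finite V] [Finite E] (ε : E → Sym2 V) : ℤ :=
  (Nat.card E : ℤ) - Nat.card V + numComponents ε

/-- Adjacency in the vertex-deleted multigraph `G - v`. -/
def AdjDel (ε : E → Sym2 V) (v : V) (a b : {w : V // w ≠ v}) : Prop :=
  ∃ e, v ∉ ε e ∧ ε e = s(a.1, b.1)

/-- The number of connected components of `G - v`. -/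
noncomputable def numComponentsDel (ε : E → Sym2 V) (v : V) : ℕ :=
  Nat.card (Quot (AdjDel ε v))

/-- The first Betti number of `G - v`, as an integer. -/
noncomputable def b1Del [Finite V] [Finite E] (ε : E → Sym2 V) (v : V) : ℤ :=
  (Nat.card {e : E // v ∉ ε e} : ℤ) - Nat.card {w : V // w ≠ v} + numComponentsDel ε v

/-- `v` is a cut vertex if deleting it increases the number of connected components. -/
def IsCutVertex (ε : E → Sym2 V) (v : V) : Prop :=
  numComponents ε < numComponentsDel ε v

end MG

open Relation


namespace CVAux

variable {α β : Type}

theorem eqvGen_map {r : α → α → Prop} {s : β → β → Prop} (f : α → β)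
    (h : ∀ a b, r a b → s (f a) (f b)) {a b : α} (hab : EqvGen r a b) :
    EqvGen s (f a) (f b) := by
  induction hab with
  | rel x y hxy => exact EqvGen.rel _ _ (h _ _ hxy)
  | refl x => exact EqvGen.refl _
  | symm x y _ ih => exact EqvGen.symm _ _ ih
  | trans x y z _ _ ih1 ih2 => exact EqvGen.trans _ _ _ ih1 ih2

theorem eqvGen_isolated {r : α → α → Prop} {u : α} (h1 : ∀ w, ¬ r u w) (h2 : ∀ w, ¬ r w u)
    {p q : α} (hpq : EqvGen r p q) : p = u ↔ q = u := by
  induction hpq with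
  | rel x y hxy =>
    constructor
    · rintro rfl; exact absurd hxy (h1 _)
    · rintro rfl; exact absurd hxy (h2 _)
  | refl x => exact Iff.rfl
  | symm x y _ ih => exact ih.symm
  | trans x y z _ _ ih1 ih2 => exact ih1.trans ih2

theorem eqvGen_decomp {r s : α → α → Prop} {a b : α}
    (hs : ∀ u v, s u v ↔ r u v ∨ (u = a ∧ v = b) ∨ (u = b ∧ v = a)) {u v : α}
    (h : EqvGen s u v) :
    EqvGen r u v ∨ (EqvGen r u a ∧ EqvGen r b v) ∨ (EqvGen r u b ∧ EqvGen r a v) := by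
  induction h with
  | rel x y hxy =>
    rcases (hs x y).1 hxy with h | ⟨rfl, rfl⟩ | ⟨rfl, rfl⟩
    · exact Or.inl (EqvGen.rel _ _ h)
    · exact Or.inr (Or.inl ⟨EqvGen.refl _, EqvGen.refl _⟩)
    · exact Or.inr (Or.inr ⟨EqvGen.refl _, EqvGen.refl _⟩)
  | refl x => exact Or.inl (EqvGen.refl _)
  | symm x y _ ih =>
    rcases ih with h | ⟨h1, h2⟩ | ⟨h1, h2⟩
    · exact Or.inl (EqvGen.symm _ _ h)
    · exact Or.inr (Or.inr ⟨EqvGen.symm _ _ h2, EqvGen.symm _ _ h1⟩)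
    · exact Or.inr (Or.inl ⟨EqvGen.symm _ _ h2, EqvGen.symm _ _ h1⟩)
  | trans x y z _ _ ih1 ih2 =>
    rcases ih1 with h | ⟨h1, h2⟩ | ⟨h1, h2⟩ <;> rcases ih2 with g | ⟨g1, g2⟩ | ⟨g1, g2⟩
    · exact Or.inl (EqvGen.trans _ _ _ h g)
    · exact Or.inr (Or.inl ⟨EqvGen.trans _ _ _ h g1, g2⟩)
    · exact Or.inr (Or.inr ⟨EqvGen.trans _ _ _ h g1, g2⟩)
    · exact Or.inr (Or.inl ⟨h1, EqvGen.trans _ _ _ h2 g⟩)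
    · exact Or.inl (EqvGen.trans _ _ _ h1
        (EqvGen.trans _ _ _ (EqvGen.symm _ _ (EqvGen.trans _ _ _ h2 g1)) g2))
    · exact Or.inl (EqvGen.trans _ _ _ h1 g2)
    · exact Or.inr (Or.inr ⟨h1, EqvGen.trans _ _ _ h2 g⟩)
    · exact Or.inl (EqvGen.trans _ _ _ h1 g2)
    · exact Or.inl (EqvGen.trans _ _ _ h1
        (EqvGen.trans _ _ _ (EqvGen.symm _ _ (EqvGen.trans _ _ _ h2 g1)) g2))

/-- A non-injective surjection between finite types strictly decreases cardinality. -/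
theorem card_lt_of_surj [Finite α] {f : α → β} (hf : Function.Surjective f) {x y : α}
    (hne : x ≠ y) (heq : f x = f y) : Nat.card β < Nat.card α := by
  have : Finite β := Finite.of_surjective f hf
  classical
  set g := Function.surjInv hf with hg
  have hginj : Function.Injective g := Function.injective_surjInv hf
  have hrange : ∀ z : α, z ∈ Set.range g → z = g (f z) := by
    rintro z ⟨w, rfl⟩
    rw [Function.surjInv_eq hf w]
  have key : ∃ w : α, f w = f x ∧ w ∉ Set.range g := by
    by_cases hc : g (f x) = x
    · refine ⟨y, heq.symm, fun hy => hne ?_⟩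
      have := hrange y hy
      rw [← heq] at this
      rw [hc] at this
      exact this.symm
    · exact ⟨x, rfl, fun hx => hc ((hrange x hx).symm)⟩
  obtain ⟨w, hw1, hw2⟩ := key
  have hinj : Function.Injective (fun o : Option β => Option.elim o w g) := by
    rintro (_ | b1) (_ | b2) h
    · rfl
    · exact absurd ⟨b2, h.symm⟩ hw2
    · exact absurd ⟨b1, h⟩ hw2
    · exact congrArg some (hginj h)
  have := Nat.card_le_card_of_injective _ hinj
  rw [Finite.card_option] at this
  omega

/-- Surjective map with no more elements downstairs than upstairs is injective. -/
theorem inj_of_surj_card_le [Finite α] {f : α → β} (hf : Function.Surjective f)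
    (hc : Nat.card α ≤ Nat.card β) : Function.Injective f := by
  intro x y heq
  by_contra hne
  exact absurd hc (not_le.2 (card_lt_of_surj hf hne heq))

/-- Adding one generating pair to a relation decreases the number of classes by at most 1. -/
theorem card_quot_le_add_one [Finite α] {r s : α → α → Prop} {a b : α}
    (hs : ∀ u v, s u v ↔ r u v ∨ (u = a ∧ v = b) ∨ (u = b ∧ v = a)) :
    Nat.card (Quot r) ≤ Nat.card (Quot s) + 1 := by
  classical
  set F : Quot r → Quot s := Quot.map id (fun u v huv => (hs u v).2 (Or.inl huv)) with hF
  set j : Quot r → Option (Quot s) := fun q => if q = Quot.mk r b then none else some (F q) with hj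
  have hinj : Function.Injective j := by
    intro q1 q2 h
    by_cases h1 : q1 = Quot.mk r b <;> by_cases h2 : q2 = Quot.mk r b
    · rw [h1, h2]
    · simp [hj, h1, h2] at h
    · simp [hj, h1, h2] at h
    · simp only [hj, if_neg h1, if_neg h2, Option.some.injEq] at h
      obtain ⟨p1, rfl⟩ := Quot.exists_rep q1
      obtain ⟨p2, rfl⟩ := Quot.exists_rep q2
      have hFx : F (Quot.mk r p1) = Quot.mk s p1 := rfl
      have hFy : F (Quot.mk r p2) = Quot.mk s p2 := rfl
      rw [hFx, hFy] at h
      rcases eqvGen_decomp hs (Quot.eqvGen_exact h) with hh | ⟨hh1, hh2⟩ | ⟨hh1, hh2⟩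
      · exact Quot.eqvGen_sound hh
      · exact absurd (Quot.eqvGen_sound (EqvGen.symm _ _ hh2)) h2
      · exact absurd (Quot.eqvGen_sound hh1) h1
  have hfq : Finite (Quot s) := Quot.finite s
  have hft : Fintype (Quot s) := Fintype.ofFinite _
  have := Nat.card_le_card_of_injective _ hinj
  rwa [Finite.card_option] at this

end CVAux

namespace CVAux

variable {V E : Type}

theorem quot_eq_of_deg_zero [Finite E] {ε : E → Sym2 V} {v w : V} (h0 : MG.deg ε v = 0)
    (h : Quot.mk (MG.Adj ε) v = Quot.mk (MG.Adj ε) w) : v = w := by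
  have hpos : ∀ e : E, v ∉ ε e := by
    intro e he
    have hne : Nonempty {e : E // v ∈ ε e} := ⟨⟨e, he⟩⟩
    have hp : 0 < Nat.card {e : E // v ∈ ε e} := Nat.card_pos
    have h0' : Nat.card {e : E // v ∈ ε e} = 0 := h0
    omega
  have h1 : ∀ u, ¬ MG.Adj ε v u := by
    rintro u ⟨e, he⟩
    exact hpos e (by rw [he]; exact Sym2.mem_mk_left _ _)
  have h2 : ∀ u, ¬ MG.Adj ε u v := by
    rintro u ⟨e, he⟩
    exact hpos e (by rw [he]; exact Sym2.mem_mk_right _ _)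
  exact ((eqvGen_isolated h1 h2 (Quot.eqvGen_exact h)).1 rfl).symm

theorem noDegOne [Finite V] [Finite E] (ε : E → Sym2 V)
    (hloop : ∀ e, ¬ (ε e).IsDiag) (hb1 : 1 ≤ MG.b1 ε)
    (S : Set V) (hS : ∀ v ∈ S, 3 ≤ MG.deg ε v)
    (hd : ∀ v, MG.deg ε v ≠ 1) :
    (S.ncard : ℤ) - 2 * (MG.b1 ε - 1) ≤ (({v ∈ S | MG.IsCutVertex ε v}).ncard : ℤ) := by
  have hTnn : (0:ℤ) ≤ (({v ∈ S | MG.IsCutVertex ε v}).ncard : ℤ) := Int.natCast_nonneg _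
  rcases Set.eq_empty_or_nonempty S with rfl | ⟨v₀, hv₀⟩
  · simp only [Set.ncard_empty, Nat.cast_zero]
    linarith
  suffices h : (S.ncard : ℤ) ≤ 2 * (MG.b1 ε - 1) by linarith
  classical
  have fV : Fintype V := Fintype.ofFinite V
  have fE : Fintype E := Fintype.ofFinite E
  -- handshake
  have hdeg_card : ∀ v, MG.deg ε v = (Finset.univ.filter fun e => v ∈ ε e).card := by
    intro v
    rw [MG.deg, Nat.card_eq_fintype_card, Fintype.card_subtype]
  have h2 : ∀ e : E, (Finset.univ.filter fun v => v ∈ ε e).card = 2 := by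
    intro e
    obtain ⟨a, b, hab⟩ : ∃ a b, ε e = s(a, b) := (ε e).inductionOn (fun x y => ⟨x, y, rfl⟩)
    have hne : a ≠ b := fun h => hloop e (by rw [hab]; exact Sym2.mk_isDiag_iff.2 h)
    have hset : (Finset.univ.filter fun v => v ∈ ε e) = {a, b} := by
      ext v
      simp [hab, Sym2.mem_iff]
    rw [hset, Finset.card_pair hne]
  have hsum : ∑ v : V, MG.deg ε v = 2 * Fintype.card E := by
    have hswap : ∑ v : V, MG.deg ε v
        = ∑ e : E, (Finset.univ.filter fun v => v ∈ ε e).card := by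
      simp only [hdeg_card, Finset.card_filter]
      exact Finset.sum_comm
    rw [hswap, Finset.sum_congr rfl (fun e _ => h2 e), Finset.sum_const, Finset.card_univ,
      smul_eq_mul, mul_comm]
  -- isolated vertices
  set I : Finset V := Finset.univ.filter (fun v => MG.deg ε v = 0) with hI
  have hIc : I.card + 1 ≤ MG.numComponents ε := by
    have fq : Finite (Quot (MG.Adj ε)) := Quot.finite _
    have hv₀3 := hS v₀ hv₀
    have hinj : Function.Injective
        (fun o : Option {v : V // MG.deg ε v = 0} =>
          Option.elim o (Quot.mk (MG.Adj ε) v₀) (fun w => Quot.mk (MG.Adj ε) w.1)) := by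
      rintro (_ | w1) (_ | w2) h
      · rfl
      · have h1 : w2.1 = v₀ := quot_eq_of_deg_zero w2.2 (h.symm)
        have h2 : MG.deg ε v₀ = 0 := h1 ▸ w2.2
        omega
      · have h1 : w1.1 = v₀ := quot_eq_of_deg_zero w1.2 h
        have h2 : MG.deg ε v₀ = 0 := h1 ▸ w1.2
        omega
      · exact congrArg some (Subtype.ext (quot_eq_of_deg_zero w1.2 h))
    have hle := Nat.card_le_card_of_injective _ hinj
    rw [Finite.card_option, Nat.card_eq_fintype_card, Fintype.card_subtype] at hle
    exact hle
  -- sum bound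
  have hfin : S.Finite := S.toFinite
  have hScard : S.ncard = hfin.toFinset.card := Set.ncard_eq_toFinset_card S hfin
  set Sf : Finset V := hfin.toFinset with hSfdef
  have hSsub : Sf ⊆ Finset.univ \ I := by
    intro v hv
    have hv' : v ∈ S := (Set.Finite.mem_toFinset hfin).1 hv
    have h3 := hS v hv'
    simp only [hI, Finset.mem_sdiff, Finset.mem_univ, Finset.mem_filter, true_and]
    omega
  have t1 : (Sf.card : ℤ) ≤ ∑ v ∈ Sf, ((MG.deg ε v : ℤ) - 2) := by
    calc (Sf.card : ℤ) = ∑ _v ∈ Sf, (1:ℤ) := by simp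
      _ ≤ _ := Finset.sum_le_sum (fun v hv => by
          have h3 := hS v ((Set.Finite.mem_toFinset hfin).1 hv)
          omega)
  have t2 : ∑ v ∈ Sf, ((MG.deg ε v:ℤ) - 2) ≤ ∑ v ∈ Finset.univ \ I, ((MG.deg ε v:ℤ) - 2) := by
    apply Finset.sum_le_sum_of_subset_of_nonneg hSsub
    intro v hv _
    have hvI : ¬ MG.deg ε v = 0 := by
      simp only [hI, Finset.mem_sdiff, Finset.mem_univ, Finset.mem_filter, true_and] at hv
      exact hv
    have hv1 := hd v
    omega
  have t3 : ∑ v ∈ Finset.univ \ I, ((MG.deg ε v:ℤ) - 2)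
      = (∑ v : V, ((MG.deg ε v:ℤ) - 2)) + 2 * I.card := by
    rw [Finset.sum_sdiff_eq_sub (Finset.subset_univ I)]
    have hIconst : ∑ v ∈ I, ((MG.deg ε v:ℤ) - 2) = I.card • (-2:ℤ) := by
      rw [← Finset.sum_const]
      refine Finset.sum_congr rfl (fun v hv => ?_)
      simp only [hI, Finset.mem_filter] at hv
      rw [hv.2]
      norm_num
    rw [hIconst, nsmul_eq_mul]
    ring
  have t4 : (∑ v : V, ((MG.deg ε v:ℤ) - 2))
      = 2 * (Fintype.card E : ℤ) - 2 * (Fintype.card V:ℤ) := by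
    have h' : (∑ v : V, (MG.deg ε v:ℤ)) = 2 * (Fintype.card E:ℤ) := by
      exact_mod_cast congrArg (Nat.cast : ℕ → ℤ) hsum
    rw [Finset.sum_sub_distrib, h']
    simp [Finset.card_univ, mul_comm]
  have hb1def : MG.b1 ε
      = (Fintype.card E : ℤ) - (Fintype.card V : ℤ) + (MG.numComponents ε : ℤ) := by
    rw [MG.b1, Nat.card_eq_fintype_card, Nat.card_eq_fintype_card]
  have hIc' : (I.card : ℤ) + 1 ≤ (MG.numComponents ε : ℤ) := by exact_mod_cast hIc
  rw [hScard]
  linarith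

end CVAux

namespace CVAux

theorem aux (n : ℕ) : ∀ (V E : Type) [Finite V] [Finite E] (ε : E → Sym2 V),
    Nat.card E ≤ n → (∀ e, ¬ (ε e).IsDiag) → 1 ≤ MG.b1 ε →
    ∀ (S : Set V), (∀ v ∈ S, 3 ≤ MG.deg ε v) →
    (S.ncard : ℤ) - 2 * (MG.b1 ε - 1) ≤ (({v ∈ S | MG.IsCutVertex ε v}).ncard : ℤ) := by
  induction n with
  | zero =>
    intro V E _ _ ε hE hloop hb1 S hS
    refine noDegOne ε hloop hb1 S hS (fun v => ?_)
    have hle : MG.deg ε v ≤ Nat.card E :=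
      Nat.card_le_card_of_injective Subtype.val Subtype.val_injective
    omega
  | succ n ih =>
    intro V E _ _ ε hE hloop hb1 S hS
    by_cases hdeg1 : ∃ u, MG.deg ε u = 1
    · obtain ⟨u, hu1⟩ := hdeg1
      classical
      -- the unique edge at u
      have hu1' : Nat.card {e : E // u ∈ ε e} = 1 := hu1
      obtain ⟨hsub, hne⟩ := Nat.card_eq_one_iff_unique.1 hu1'
      obtain ⟨⟨e₀, he₀⟩⟩ := hne
      have huniq : ∀ e : E, u ∈ ε e → e = e₀ := fun e he =>
        congrArg Subtype.val (hsub.allEq ⟨e, he⟩ ⟨e₀, he₀⟩)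
      obtain ⟨x, hx⟩ : ∃ y, ε e₀ = s(u, y) := Sym2.mem_iff_exists.1 he₀
      have hux : u ≠ x := fun h => hloop e₀ (by rw [hx]; exact Sym2.mk_isDiag_iff.2 h)
      -- the deleted graph
      set ε' : {e : E // e ≠ e₀} → Sym2 V := fun e => ε e.1 with hε'
      have hloop' : ∀ e, ¬ (ε' e).IsDiag := fun e => hloop e.1
      -- u is isolated in ε'
      have hu_iso : ∀ e' : {e : E // e ≠ e₀}, u ∉ ε' e' := fun e' h => e'.2 (huniq e'.1 h)
      have hu_nadj : ∀ w, ¬ MG.Adj ε' u w := by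
        rintro w ⟨e', he'⟩
        exact hu_iso e' (by rw [he']; exact Sym2.mem_mk_left _ _)
      have hu_nadj' : ∀ w, ¬ MG.Adj ε' w u := by
        rintro w ⟨e', he'⟩
        exact hu_iso e' (by rw [he']; exact Sym2.mem_mk_right _ _)
      -- edge count
      have hEcard : Nat.card E = Nat.card {e : E // e ≠ e₀} + 1 := by
        rw [← Nat.card_congr (Equiv.optionSubtypeNe e₀), Finite.card_option]
      -- components go up by exactly one
      have hAdjIff : ∀ p q : V,
          MG.Adj ε p q ↔ MG.Adj ε' p q ∨ (p = u ∧ q = x) ∨ (p = x ∧ q = u) := by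
        intro p q
        constructor
        · rintro ⟨e, he⟩
          by_cases h : e = e₀
          · subst h
            rw [hx] at he
            rcases Sym2.eq_iff.1 he with ⟨h1, h2⟩ | ⟨h1, h2⟩
            · exact Or.inr (Or.inl ⟨h1.symm, h2.symm⟩)
            · exact Or.inr (Or.inr ⟨h2.symm, h1.symm⟩)
          · exact Or.inl ⟨⟨e, h⟩, he⟩
        · rintro (⟨e', he'⟩ | ⟨rfl, rfl⟩ | ⟨rfl, rfl⟩)
          · exact ⟨e'.1, he'⟩
          · exact ⟨e₀, hx⟩
          · exact ⟨e₀, hx.trans Sym2.eq_swap⟩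
      have hcomp_le : Nat.card (Quot (MG.Adj ε')) ≤ Nat.card (Quot (MG.Adj ε)) + 1 :=
        card_quot_le_add_one hAdjIff
      have hcomp_lt : Nat.card (Quot (MG.Adj ε)) < Nat.card (Quot (MG.Adj ε')) := by
        have hsurj : Function.Surjective
            (Quot.map (id : V → V)
              (fun p q hpq => (hAdjIff p q).2 (Or.inl hpq)) :
              Quot (MG.Adj ε') → Quot (MG.Adj ε)) := by
          intro q
          obtain ⟨p, rfl⟩ := Quot.exists_rep q
          exact ⟨Quot.mk _ p, rfl⟩
        have hne2 : Quot.mk (MG.Adj ε') u ≠ Quot.mk (MG.Adj ε') x := by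
          intro h
          have hxu : x = u := (eqvGen_isolated hu_nadj hu_nadj' (Quot.eqvGen_exact h)).1 rfl
          exact hux hxu.symm
        have heq2 : (Quot.map (id : V → V)
              (fun p q hpq => (hAdjIff p q).2 (Or.inl hpq)) :
              Quot (MG.Adj ε') → Quot (MG.Adj ε)) (Quot.mk _ u)
            = (Quot.map (id : V → V)
              (fun p q hpq => (hAdjIff p q).2 (Or.inl hpq))) (Quot.mk _ x) :=
          Quot.sound ⟨e₀, hx⟩
        exact card_lt_of_surj hsurj hne2 heq2
      have hcomp : MG.numComponents ε' = MG.numComponents ε + 1 := by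
        have h1 : MG.numComponents ε' = Nat.card (Quot (MG.Adj ε')) := rfl
        have h2 : MG.numComponents ε = Nat.card (Quot (MG.Adj ε)) := rfl
        omega
      -- b1 preserved
      have hb1eq : MG.b1 ε' = MG.b1 ε := by
        rw [MG.b1, MG.b1, hcomp, hEcard]
        push_cast
        ring
      -- degrees preserved away from u and x
      have hdeg_eq : ∀ v, v ≠ u → v ≠ x → MG.deg ε' v = MG.deg ε v := by
        intro v hvu hvx
        refine Nat.card_congr ⟨fun p => ⟨p.1.1, p.2⟩, fun p => ⟨⟨p.1, fun h => ?_⟩, p.2⟩,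
          fun p => rfl, fun p => rfl⟩
        have : v ∈ ε e₀ := h ▸ p.2
        rw [hx, Sym2.mem_iff] at this
        rcases this with rfl | rfl
        · exact hvu rfl
        · exact hvx rfl
      -- x is a cut vertex if it has degree ≥ 3
      have hcutx : x ∈ S → MG.IsCutVertex ε x := by
        intro hxS
        have hdx := hS x hxS
        obtain ⟨e₁, he₁x, he₁ne⟩ : ∃ e₁ : E, x ∈ ε e₁ ∧ e₁ ≠ e₀ := by
          have : 1 < Nat.card {e : E // x ∈ ε e} := by
            have : MG.deg ε x = Nat.card {e : E // x ∈ ε e} := rfl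
            omega
          obtain ⟨⟨f₁, hf₁⟩, ⟨f₂, hf₂⟩, hf12⟩ :=
            Finite.one_lt_card_iff_nontrivial.1 this
          rcases eq_or_ne f₁ e₀ with rfl | h
          · refine ⟨f₂, hf₂, fun h2 => hf12 ?_⟩
            subst h2
            rfl
          · exact ⟨f₁, hf₁, h⟩
        obtain ⟨y, hy⟩ : ∃ y, ε e₁ = s(x, y) := Sym2.mem_iff_exists.1 he₁x
        have hxy : x ≠ y := fun h => hloop e₁ (by rw [hy]; exact Sym2.mk_isDiag_iff.2 h)
        have hyu : y ≠ u := by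
          rintro rfl
          exact he₁ne (huniq e₁ (by rw [hy]; exact Sym2.mem_mk_right _ _))
        -- the projection map from components of G - x to components of G
        set ψ : Quot (MG.AdjDel ε x) → Quot (MG.Adj ε) :=
          Quot.lift (fun p => Quot.mk (MG.Adj ε) p.1)
            (fun p q hpq => Quot.sound ⟨hpq.choose, hpq.choose_spec.2⟩) with hψ
        have hψmk : ∀ p : {w : V // w ≠ x}, ψ (Quot.mk _ p) = Quot.mk (MG.Adj ε) p.1 :=
          fun p => rfl
        have hmkux : Quot.mk (MG.Adj ε) u = Quot.mk (MG.Adj ε) x := Quot.sound ⟨e₀, hx⟩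
        have hmkxy : Quot.mk (MG.Adj ε) x = Quot.mk (MG.Adj ε) y := Quot.sound ⟨e₁, hy⟩
        have hψsurj : Function.Surjective ψ := by
          intro q
          obtain ⟨p, rfl⟩ := Quot.exists_rep q
          by_cases hp : p = x
          · subst hp
            exact ⟨Quot.mk _ ⟨u, hux⟩, hmkux⟩
          · exact ⟨Quot.mk _ ⟨p, hp⟩, rfl⟩
        have hXY : (Quot.mk (MG.AdjDel ε x) ⟨u, hux⟩ : Quot (MG.AdjDel ε x))
            ≠ Quot.mk (MG.AdjDel ε x) ⟨y, Ne.symm hxy⟩ := by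
          intro h
          have hmap : Relation.EqvGen (MG.Adj ε') u y :=
            eqvGen_map (s := MG.Adj ε') (Subtype.val : {w : V // w ≠ x} → V)
              (fun p q hpq => by
                obtain ⟨e, hxe, he⟩ := hpq
                have hene : e ≠ e₀ := by
                  rintro rfl
                  exact hxe (by rw [hx]; exact Sym2.mem_mk_right _ _)
                exact ⟨⟨e, hene⟩, he⟩) (Quot.eqvGen_exact h)
          have := (eqvGen_isolated hu_nadj hu_nadj' hmap).1 rfl
          exact hyu this
        have hψeq : ψ (Quot.mk (MG.AdjDel ε x) ⟨u, hux⟩)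
            = ψ (Quot.mk (MG.AdjDel ε x) ⟨y, Ne.symm hxy⟩) := by
          rw [hψmk, hψmk]
          exact hmkux.trans hmkxy
        exact card_lt_of_surj hψsurj hXY hψeq
      -- cut vertices of the smaller graph are cut vertices of G
      have hcut_pres : ∀ v, v ≠ u → v ≠ x → MG.IsCutVertex ε' v → MG.IsCutVertex ε v := by
        intro v hvu hvx hcut
        have hDelIff : ∀ p q : {w : V // w ≠ v},
            MG.AdjDel ε v p q ↔ MG.AdjDel ε' v p q ∨
              (p = ⟨u, Ne.symm hvu⟩ ∧ q = ⟨x, Ne.symm hvx⟩) ∨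
              (p = ⟨x, Ne.symm hvx⟩ ∧ q = ⟨u, Ne.symm hvu⟩) := by
          intro p q
          constructor
          · rintro ⟨e, hv, he⟩
            by_cases h : e = e₀
            · subst h
              rw [hx] at he
              rcases Sym2.eq_iff.1 he with ⟨h1, h2⟩ | ⟨h1, h2⟩
              · exact Or.inr (Or.inl ⟨Subtype.ext h1.symm, Subtype.ext h2.symm⟩)
              · exact Or.inr (Or.inr ⟨Subtype.ext h2.symm, Subtype.ext h1.symm⟩)
            · exact Or.inl ⟨⟨e, h⟩, hv, he⟩
          · have hve₀ : v ∉ ε e₀ := by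
              rw [hx, Sym2.mem_iff]
              rintro (rfl | rfl)
              · exact hvu rfl
              · exact hvx rfl
            rintro (⟨e', hv, he'⟩ | ⟨rfl, rfl⟩ | ⟨rfl, rfl⟩)
            · exact ⟨e'.1, hv, he'⟩
            · exact ⟨e₀, hve₀, hx⟩
            · exact ⟨e₀, hve₀, hx.trans Sym2.eq_swap⟩
        have hdel_le : Nat.card (Quot (MG.AdjDel ε' v)) ≤ Nat.card (Quot (MG.AdjDel ε v)) + 1 :=
          card_quot_le_add_one hDelIff
        have h1 : MG.IsCutVertex ε' v := hcut
        rw [MG.IsCutVertex] at h1 ⊢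
        rw [hcomp] at h1
        have h2 : MG.numComponentsDel ε' v = Nat.card (Quot (MG.AdjDel ε' v)) := rfl
        have h3 : MG.numComponentsDel ε v = Nat.card (Quot (MG.AdjDel ε v)) := rfl
        omega
      -- apply the induction hypothesis
      have hukS : u ∉ S := fun h => by have := hS u h; omega
      set S' : Set V := S \ {x} with hS'def
      have hS' : ∀ v ∈ S', 3 ≤ MG.deg ε' v := by
        intro v hv
        obtain ⟨hvS, hvx⟩ := hv
        have hvx' : v ≠ x := hvx
        have hvu : v ≠ u := fun h => hukS (h ▸ hvS)
        rw [hdeg_eq v hvu hvx']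
        exact hS v hvS
      have hb1' : 1 ≤ MG.b1 ε' := hb1eq ▸ hb1
      have hE' : Nat.card {e : E // e ≠ e₀} ≤ n := by omega
      have IH := ih V {e : E // e ≠ e₀} ε' hE' hloop' hb1' S' hS'
      rw [hb1eq] at IH
      -- transfer back
      set T : Set V := {v ∈ S | MG.IsCutVertex ε v} with hT
      set T' : Set V := {v ∈ S' | MG.IsCutVertex ε' v} with hT'
      have hT'sub : T' ⊆ T := by
        rintro v ⟨⟨hvS, hvx⟩, hcut⟩
        have hvx' : v ≠ x := hvx
        have hvu : v ≠ u := fun h => hukS (h ▸ hvS)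
        exact ⟨hvS, hcut_pres v hvu hvx' hcut⟩
      by_cases hxS : x ∈ S
      · have hxT : x ∈ T := ⟨hxS, hcutx hxS⟩
        have hxT' : x ∉ T' := fun h => h.1.2 rfl
        have hsub2 : insert x T' ⊆ T := Set.insert_subset hxT hT'sub
        have hc1 : (insert x T').ncard = T'.ncard + 1 :=
          Set.ncard_insert_of_notMem hxT' (Set.toFinite _)
        have hc2 : (insert x T').ncard ≤ T.ncard :=
          Set.ncard_le_ncard hsub2 (Set.toFinite _)
        have hc3 : S'.ncard + 1 = S.ncard :=
          Set.ncard_diff_singleton_add_one hxS (Set.toFinite _)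
        have hc1' : ((insert x T').ncard : ℤ) = (T'.ncard : ℤ) + 1 := by exact_mod_cast hc1
        have hc2' : ((insert x T').ncard : ℤ) ≤ (T.ncard : ℤ) := by exact_mod_cast hc2
        have hc3' : (S'.ncard : ℤ) + 1 = (S.ncard : ℤ) := by exact_mod_cast hc3
        linarith
      · have hSS' : S' = S := Set.diff_singleton_eq_self hxS
        rw [hSS'] at IH
        have hc2 : T'.ncard ≤ T.ncard := Set.ncard_le_ncard hT'sub (Set.toFinite _)
        have hc2' : (T'.ncard : ℤ) ≤ (T.ncard : ℤ) := by exact_mod_cast hc2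
        linarith
    · push_neg at hdeg1
      exact noDegOne ε hloop hb1 S hS hdeg1

end CVAux

/-- The strengthened combinatorial claim proved inside Proposition 4.13 of the paper:
in a finite loopless multigraph `G` with first Betti number `b₁(G) ≥ 1`, for any set `S`
of vertices each of degree at least `3`, the number of cut vertices belonging to `S` is
at least `|S| - 2(b₁(G) - 1)`. -/
theorem cutVertices_lower_bound {V E : Type} [Finite V] [Finite E]
    (ε : E → Sym2 V) (hloop : ∀ e, ¬ (ε e).IsDiag)
    (hb1 : 1 ≤ MG.b1 ε)
    (S : Set V) (hS : ∀ v ∈ S, 3 ≤ MG.deg ε v) :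
    (S.ncard : ℤ) - 2 * (MG.b1 ε - 1) ≤ ({v ∈ S | MG.IsCutVertex ε v}).ncard := by
  exact CVAux.aux (Nat.card E) V E ε le_rfl hloop hb1 S hS
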